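/- Let p ≥ 1 be an integer, let h₁, h₂ ∈ ℤ² \ {0} be non-parallel, and let A ≥ 2 be an integer. For (n, j) ∈ ℤ² × ℤ² define D(n, j)(λ₁, λ₂, m, M) = n₁[(h₁·λ + m)² + M] + n₂[(h₂·λ + m)² + M] + (j·λ + m)² + M, where λ = (λ₁, λ₂). Then there exists δ₀ ∈ (0, 1) such that for all δ ∈ (0, δ₀), setting R = ⌊|log δ|^{3/4}⌋ and N = A^R, the set of (λ, m, M) ∈ (0, 2π)⁴ for which there exists (n, j) ∈ ([−N, N]⁴ ∩ ℤ⁴) \ {(−e₁, h₁), (−e₂, h₂)} with |D(n, j)(λ, m, M)| ≤ 2 δ^{p/2} has Lebesgue measure less than δ^{p/5}. -/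

import Mathlib

open MeasureTheory Real Set
open scoped ENNReal

local notation "Box" => Set.Ioo (0:ℝ) (2*π)

lemma lin_bound (b c ε κ : ℝ) (hε : 0 ≤ ε) (hκ : 0 < κ) (hb : κ ≤ |b|) :
    volume {t : ℝ | |b * t + c| ≤ ε} ≤ ENNReal.ofReal (2 * ε / κ) := by
  have hb0 : b ≠ 0 := by
    intro h; rw [h] at hb; simp at hb; linarith
  have habs : (0:ℝ) < |b| := lt_of_lt_of_le hκ hb
  have hsub : {t : ℝ | |b * t + c| ≤ ε} ⊆ Icc (-(c/b) - ε/κ) (-(c/b) + ε/κ) := by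
    intro t ht
    simp only [mem_setOf_eq] at ht
    have h2 : |t + c/b| ≤ ε / κ := by
      rw [show t + c/b = (b*t+c)/b by field_simp, abs_div]
      calc |b*t+c| / |b| ≤ ε / |b| := by gcongr
        _ ≤ ε / κ := by gcongr
    rw [abs_le] at h2
    constructor <;> [linarith [h2.1]; linarith [h2.2]]
  calc volume {t : ℝ | |b * t + c| ≤ ε} ≤ volume (Icc (-(c/b) - ε/κ) (-(c/b) + ε/κ)) :=
        measure_mono hsub
    _ = ENNReal.ofReal (2 * ε / κ) := by
        rw [Real.volume_Icc]; congr 1; ring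

lemma quad_bound (a b c ε : ℝ) (hε : 0 ≤ ε) (ha : 1 ≤ |a|) :
    volume {t : ℝ | |a * t^2 + b * t + c| ≤ ε} ≤ ENNReal.ofReal (4 * Real.sqrt ε) := by
  have ha0 : a ≠ 0 := by intro h; rw [h] at ha; simp at ha; linarith
  set x₀ : ℝ := -b/(2*a) with hx₀
  set e : ℝ := x₀^2 - c/a with he
  set r : ℝ := Real.sqrt (e + ε) with hr
  set s : ℝ := Real.sqrt (e - ε) with hs
  have hs0 : 0 ≤ s := Real.sqrt_nonneg _
  have hr0 : 0 ≤ r := Real.sqrt_nonneg _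
  have hrs : r - s ≤ 2 * Real.sqrt ε := by
    have h1 : e + ε ≤ (s + 2 * Real.sqrt ε)^2 := by
      rcases le_or_gt (e - ε) 0 with hc | hc
      · have hszero : s = 0 := Real.sqrt_eq_zero_of_nonpos hc
        rw [hszero]
        nlinarith [Real.sq_sqrt hε]
      · have hss : s^2 = e - ε := Real.sq_sqrt hc.le
        nlinarith [Real.sqrt_nonneg ε, Real.sq_sqrt hε]
    have h2 : r ≤ s + 2 * Real.sqrt ε := by
      rw [hr]
      calc Real.sqrt (e + ε) ≤ Real.sqrt ((s + 2*Real.sqrt ε)^2) := Real.sqrt_le_sqrt h1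
        _ = s + 2*Real.sqrt ε := Real.sqrt_sq (by positivity)
    linarith
  have hsub : {t : ℝ | |a * t^2 + b * t + c| ≤ ε} ⊆
      Icc (x₀ - r) (x₀ - s) ∪ Icc (x₀ + s) (x₀ + r) := by
    intro t ht
    simp only [mem_setOf_eq] at ht
    have key : a * ((t - x₀)^2 - e) = a * t^2 + b * t + c := by
      rw [hx₀] at he ⊢; rw [he]; field_simp; ring
    have h1 : |(t - x₀)^2 - e| ≤ ε := by
      have hq : |(t-x₀)^2 - e| = |a * t^2 + b*t+c| / |a| := by
        rw [← key, abs_mul]; field_simp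
      rw [hq]
      calc |a * t^2 + b*t+c| / |a| ≤ ε / |a| := by gcongr
        _ ≤ ε / 1 := by gcongr
        _ = ε := div_one ε
    rw [abs_le] at h1
    have hub : |t - x₀| ≤ r := Real.abs_le_sqrt (by linarith)
    have hlb : s ≤ |t - x₀| := by
      calc s ≤ Real.sqrt ((t-x₀)^2) := Real.sqrt_le_sqrt (by linarith)
        _ = |t - x₀| := Real.sqrt_sq_eq_abs _
    rcases le_or_gt 0 (t - x₀) with hc | hc
    · right
      rw [abs_of_nonneg hc] at hub hlb
      exact ⟨by linarith, by linarith⟩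
    · left
      rw [abs_of_neg hc] at hub hlb
      exact ⟨by linarith, by linarith⟩
  calc volume {t : ℝ | |a * t^2 + b * t + c| ≤ ε}
      ≤ volume (Icc (x₀ - r) (x₀ - s) ∪ Icc (x₀ + s) (x₀ + r)) := measure_mono hsub
    _ ≤ volume (Icc (x₀ - r) (x₀ - s)) + volume (Icc (x₀ + s) (x₀ + r)) := measure_union_le _ _
    _ ≤ ENNReal.ofReal (2 * Real.sqrt ε) + ENNReal.ofReal (2 * Real.sqrt ε) := by
        rw [Real.volume_Icc, Real.volume_Icc]
        gcongr <;> linarith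
    _ = ENNReal.ofReal (4 * Real.sqrt ε) := by
        rw [← ENNReal.ofReal_add (by positivity) (by positivity)]; congr 1; ring

lemma vol_box2 : (volume : Measure (ℝ×ℝ)) (Box ×ˢ Box) = ENNReal.ofReal (2*π) ^ 2 := by
  rw [Measure.volume_eq_prod, Measure.prod_prod, Real.volume_Ioo]
  simp [pow_two, sub_zero]

lemma vol_box3 : (volume : Measure (ℝ×ℝ×ℝ)) (Box ×ˢ Box ×ˢ Box) = ENNReal.ofReal (2*π) ^ 3 := by
  rw [Measure.volume_eq_prod, Measure.prod_prod, Real.volume_Ioo, vol_box2]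
  rw [sub_zero]; ring

lemma slice1 (s : Set (ℝ × ℝ × ℝ × ℝ)) (hs : MeasurableSet s) (C : ℝ≥0∞)
    (hsub : ∀ q ∈ s, q.2.1 ∈ Box ∧ q.2.2.1 ∈ Box ∧ q.2.2.2 ∈ Box)
    (h : ∀ y z w : ℝ, volume {x : ℝ | (x, y, z, w) ∈ s} ≤ C) :
    volume s ≤ ENNReal.ofReal (2*π) ^ 3 * C := by
  rw [Measure.volume_eq_prod, Measure.prod_apply_symm hs]
  have hb : ∀ y : ℝ×ℝ×ℝ, (volume : Measure ℝ) ((fun x => (x, y)) ⁻¹' s)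
      ≤ (Box ×ˢ Box ×ˢ Box : Set (ℝ×ℝ×ℝ)).indicator (fun _ => C) y := by
    intro y
    by_cases hy : y ∈ (Box ×ˢ Box ×ˢ Box : Set (ℝ×ℝ×ℝ))
    · rw [Set.indicator_of_mem hy]
      exact h y.1 y.2.1 y.2.2
    · rw [Set.indicator_of_notMem hy]
      have : ((fun x => (x, y)) ⁻¹' s) = ∅ := by
        ext x; simp only [Set.mem_preimage, Set.mem_empty_iff_false, iff_false]
        intro hx
        exact hy (by simpa using hsub _ hx)
      rw [this]; simp
  calc ∫⁻ y, (volume : Measure ℝ) ((fun x => (x, y)) ⁻¹' s) ∂(volume : Measure (ℝ×ℝ×ℝ))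
      ≤ ∫⁻ y, (Box ×ˢ Box ×ˢ Box : Set (ℝ×ℝ×ℝ)).indicator (fun _ => C) y := lintegral_mono hb
    _ = C * volume (Box ×ˢ Box ×ˢ Box : Set (ℝ×ℝ×ℝ)) := by
        rw [lintegral_indicator (measurableSet_Ioo.prod (measurableSet_Ioo.prod measurableSet_Ioo)), setLIntegral_const]
    _ = ENNReal.ofReal (2*π) ^ 3 * C := by rw [vol_box3, mul_comm]

lemma ind_bound {α : Type*} [MeasurableSpace α] (μ : Measure α) (f : α → ℝ≥0∞)
    (B : Set α) (hB : MeasurableSet B) (C : ℝ≥0∞)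
    (h : ∀ a, f a ≤ B.indicator (fun _ => C) a) :
    ∫⁻ a, f a ∂μ ≤ C * μ B := by
  calc ∫⁻ a, f a ∂μ ≤ ∫⁻ a, B.indicator (fun _ => C) a ∂μ := lintegral_mono h
    _ = C * μ B := by rw [lintegral_indicator hB, setLIntegral_const]

lemma slice2 (s : Set (ℝ × ℝ × ℝ × ℝ)) (hs : MeasurableSet s) (C : ℝ≥0∞)
    (hsub : ∀ q ∈ s, q.1 ∈ Box ∧ q.2.2.1 ∈ Box ∧ q.2.2.2 ∈ Box)
    (h : ∀ x z w : ℝ, volume {y : ℝ | (x, y, z, w) ∈ s} ≤ C) :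
    volume s ≤ ENNReal.ofReal (2*π) ^ 3 * C := by
  rw [Measure.volume_eq_prod, Measure.prod_apply hs]
  have key : ∀ x : ℝ, (volume : Measure (ℝ×ℝ×ℝ)) (Prod.mk x ⁻¹' s)
      ≤ (Set.indicator Box) (fun _ => ENNReal.ofReal (2*π) ^ 2 * C) x := by
    intro x
    by_cases hx : x ∈ Box
    · rw [Set.indicator_of_mem hx]
      have hm : MeasurableSet (Prod.mk x ⁻¹' s) := measurable_prodMk_left hs
      rw [Measure.volume_eq_prod, Measure.prod_apply_symm hm]
      have := ind_bound (volume : Measure (ℝ×ℝ))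
        (fun zw => (volume : Measure ℝ) ((fun y => (y, zw)) ⁻¹' (Prod.mk x ⁻¹' s)))
        (Box ×ˢ Box) (measurableSet_Ioo.prod measurableSet_Ioo) C ?_
      · refine le_trans this ?_
        rw [vol_box2, mul_comm]
      · intro zw
        by_cases hzw : zw ∈ (Box ×ˢ Box : Set (ℝ×ℝ))
        · rw [Set.indicator_of_mem hzw]
          exact h x zw.1 zw.2
        · rw [Set.indicator_of_notMem hzw]
          have : ((fun y => (y, zw)) ⁻¹' (Prod.mk x ⁻¹' s)) = ∅ := by
            ext y; simp only [Set.mem_preimage, Set.mem_empty_iff_false, iff_false]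
            intro hy
            exact hzw (by simpa using (hsub _ hy).2)
          simp [this]
    · rw [Set.indicator_of_notMem hx]
      have : (Prod.mk x ⁻¹' s) = ∅ := by
        ext p; simp only [Set.mem_preimage, Set.mem_empty_iff_false, iff_false]
        intro hp
        exact hx (hsub _ hp).1
      rw [this]; simp
  refine le_trans (ind_bound _ _ Box measurableSet_Ioo _ key) ?_
  rw [Real.volume_Ioo, sub_zero]
  exact le_of_eq (by ring)

lemma slice3 (s : Set (ℝ × ℝ × ℝ × ℝ)) (hs : MeasurableSet s) (C : ℝ≥0∞)
    (hsub : ∀ q ∈ s, q.1 ∈ Box ∧ q.2.1 ∈ Box ∧ q.2.2.2 ∈ Box)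
    (h : ∀ x y w : ℝ, volume {z : ℝ | (x, y, z, w) ∈ s} ≤ C) :
    volume s ≤ ENNReal.ofReal (2*π) ^ 3 * C := by
  rw [Measure.volume_eq_prod, Measure.prod_apply hs]
  have key : ∀ x : ℝ, (volume : Measure (ℝ×ℝ×ℝ)) (Prod.mk x ⁻¹' s)
      ≤ (Set.indicator Box) (fun _ => ENNReal.ofReal (2*π) ^ 2 * C) x := by
    intro x
    by_cases hx : x ∈ Box
    · rw [Set.indicator_of_mem hx]
      have hm : MeasurableSet (Prod.mk x ⁻¹' s) := measurable_prodMk_left hs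
      rw [Measure.volume_eq_prod, Measure.prod_apply hm]
      have key2 : ∀ y : ℝ, (volume : Measure (ℝ×ℝ)) (Prod.mk y ⁻¹' (Prod.mk x ⁻¹' s))
          ≤ (Set.indicator Box) (fun _ => ENNReal.ofReal (2*π) * C) y := by
        intro y
        by_cases hy : y ∈ Box
        · rw [Set.indicator_of_mem hy]
          have hm2 : MeasurableSet (Prod.mk y ⁻¹' (Prod.mk x ⁻¹' s)) :=
            measurable_prodMk_left hm
          rw [Measure.volume_eq_prod, Measure.prod_apply_symm hm2]
          have key3 : ∀ w : ℝ, (volume : Measure ℝ)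
              ((fun z => (z, w)) ⁻¹' (Prod.mk y ⁻¹' (Prod.mk x ⁻¹' s)))
              ≤ (Set.indicator Box) (fun _ => C) w := by
            intro w
            by_cases hw : w ∈ Box
            · rw [Set.indicator_of_mem hw]
              exact h x y w
            · rw [Set.indicator_of_notMem hw]
              have : ((fun z => (z, w)) ⁻¹' (Prod.mk y ⁻¹' (Prod.mk x ⁻¹' s))) = ∅ := by
                ext z; simp only [Set.mem_preimage, Set.mem_empty_iff_false, iff_false]
                intro hz
                exact hw (hsub _ hz).2.2
              simp [this]
          refine le_trans (ind_bound _ _ Box measurableSet_Ioo _ key3) ?_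
          rw [Real.volume_Ioo, sub_zero]
          exact le_of_eq (mul_comm _ _)
        · rw [Set.indicator_of_notMem hy]
          have : (Prod.mk y ⁻¹' (Prod.mk x ⁻¹' s)) = ∅ := by
            ext zw; simp only [Set.mem_preimage, Set.mem_empty_iff_false, iff_false]
            intro hzw
            exact hy (hsub _ hzw).2.1
          simp [this]
      refine le_trans (ind_bound _ _ Box measurableSet_Ioo _ key2) ?_
      rw [Real.volume_Ioo, sub_zero]
      exact le_of_eq (by ring)
    · rw [Set.indicator_of_notMem hx]
      have : (Prod.mk x ⁻¹' s) = ∅ := by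
        ext p; simp only [Set.mem_preimage, Set.mem_empty_iff_false, iff_false]
        intro hp
        exact hx (hsub _ hp).1
      simp [this]
  refine le_trans (ind_bound _ _ Box measurableSet_Ioo _ key) ?_
  rw [Real.volume_Ioo, sub_zero]
  exact le_of_eq (by ring)

lemma slice4 (s : Set (ℝ × ℝ × ℝ × ℝ)) (hs : MeasurableSet s) (C : ℝ≥0∞)
    (hsub : ∀ q ∈ s, q.1 ∈ Box ∧ q.2.1 ∈ Box ∧ q.2.2.1 ∈ Box)
    (h : ∀ x y z : ℝ, volume {w : ℝ | (x, y, z, w) ∈ s} ≤ C) :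
    volume s ≤ ENNReal.ofReal (2*π) ^ 3 * C := by
  rw [Measure.volume_eq_prod, Measure.prod_apply hs]
  have key : ∀ x : ℝ, (volume : Measure (ℝ×ℝ×ℝ)) (Prod.mk x ⁻¹' s)
      ≤ (Set.indicator Box) (fun _ => ENNReal.ofReal (2*π) ^ 2 * C) x := by
    intro x
    by_cases hx : x ∈ Box
    · rw [Set.indicator_of_mem hx]
      have hm : MeasurableSet (Prod.mk x ⁻¹' s) := measurable_prodMk_left hs
      rw [Measure.volume_eq_prod, Measure.prod_apply hm]
      have key2 : ∀ y : ℝ, (volume : Measure (ℝ×ℝ)) (Prod.mk y ⁻¹' (Prod.mk x ⁻¹' s))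
          ≤ (Set.indicator Box) (fun _ => ENNReal.ofReal (2*π) * C) y := by
        intro y
        by_cases hy : y ∈ Box
        · rw [Set.indicator_of_mem hy]
          have hm2 : MeasurableSet (Prod.mk y ⁻¹' (Prod.mk x ⁻¹' s)) :=
            measurable_prodMk_left hm
          rw [Measure.volume_eq_prod, Measure.prod_apply hm2]
          have key3 : ∀ z : ℝ, (volume : Measure ℝ)
              (Prod.mk z ⁻¹' (Prod.mk y ⁻¹' (Prod.mk x ⁻¹' s)))
              ≤ (Set.indicator Box) (fun _ => C) z := by
            intro z
            by_cases hz : z ∈ Box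
            · rw [Set.indicator_of_mem hz]
              exact h x y z
            · rw [Set.indicator_of_notMem hz]
              have : (Prod.mk z ⁻¹' (Prod.mk y ⁻¹' (Prod.mk x ⁻¹' s))) = ∅ := by
                ext w; simp only [Set.mem_preimage, Set.mem_empty_iff_false, iff_false]
                intro hw
                exact hz (hsub _ hw).2.2
              simp [this]
          refine le_trans (ind_bound _ _ Box measurableSet_Ioo _ key3) ?_
          rw [Real.volume_Ioo, sub_zero]
          exact le_of_eq (mul_comm _ _)
        · rw [Set.indicator_of_notMem hy]
          have : (Prod.mk y ⁻¹' (Prod.mk x ⁻¹' s)) = ∅ := by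
            ext zw; simp only [Set.mem_preimage, Set.mem_empty_iff_false, iff_false]
            intro hzw
            exact hy (hsub _ hzw).2.1
          simp [this]
      refine le_trans (ind_bound _ _ Box measurableSet_Ioo _ key2) ?_
      rw [Real.volume_Ioo, sub_zero]
      exact le_of_eq (by ring)
    · rw [Set.indicator_of_notMem hx]
      have : (Prod.mk x ⁻¹' s) = ∅ := by
        ext p; simp only [Set.mem_preimage, Set.mem_empty_iff_false, iff_false]
        intro hp
        exact hx (hsub _ hp).1
      simp [this]
  refine le_trans (ind_bound _ _ Box measurableSet_Ioo _ key) ?_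
  rw [Real.volume_Ioo, sub_zero]
  exact le_of_eq (by ring)

lemma alg_lemma (h₁ h₂ : ℤ × ℤ) (hnp : h₁.1 * h₂.2 - h₁.2 * h₂.1 ≠ 0) (n j : ℤ × ℤ)
    (e0 : n.1 + n.2 + 1 = 0)
    (e1 : n.1 * h₁.1^2 + n.2 * h₂.1^2 + j.1^2 = 0)
    (e2 : n.1 * h₁.2^2 + n.2 * h₂.2^2 + j.2^2 = 0)
    (e3 : n.1 * h₁.1 * h₁.2 + n.2 * h₂.1 * h₂.2 + j.1 * j.2 = 0)
    (e4 : n.1 * h₁.1 + n.2 * h₂.1 + j.1 = 0)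
    (e5 : n.1 * h₁.2 + n.2 * h₂.2 + j.2 = 0) :
    (n, j) = (((-1 : ℤ), (0 : ℤ)), h₁) ∨ (n, j) = (((0 : ℤ), (-1 : ℤ)), h₂) := by
  obtain ⟨n₁, n₂⟩ := n
  obtain ⟨j₁, j₂⟩ := j
  obtain ⟨a₁, a₂⟩ := h₁
  obtain ⟨b₁, b₂⟩ := h₂
  simp only at e0 e1 e2 e3 e4 e5 hnp ⊢
  have hj1 : j₁ = -(n₁ * a₁ + n₂ * b₁) := by linarith
  have hj2 : j₂ = -(n₁ * a₂ + n₂ * b₂) := by linarith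
  subst hj1 hj2
  have E1 : n₁*(n₁+1) * a₁^2 + n₂*(n₂+1) * b₁^2 + 2*(n₁*n₂)*(a₁*b₁) = 0 := by linear_combination e1
  have E2 : n₁*(n₁+1) * a₂^2 + n₂*(n₂+1) * b₂^2 + 2*(n₁*n₂)*(a₂*b₂) = 0 := by linear_combination e2
  have E3 : n₁*(n₁+1) * (a₁*a₂) + n₂*(n₂+1) * (b₁*b₂) + (n₁*n₂)*(a₁*b₂ + a₂*b₁) = 0 := by
    linear_combination e3
  have hd2 : (a₁ * b₂ - a₂ * b₁)^2 ≠ 0 := pow_ne_zero _ hnp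
  have hα : n₁ * (n₁ + 1) = 0 := by
    have h : n₁*(n₁+1) * (a₁ * b₂ - a₂ * b₁)^2 = 0 := by
      linear_combination b₂^2 * E1 + b₁^2 * E2 - 2*b₁*b₂ * E3
    exact (mul_eq_zero.mp h).resolve_right hd2
  have hβ : n₂ * (n₂ + 1) = 0 := by
    have h : n₂*(n₂+1) * (a₁ * b₂ - a₂ * b₁)^2 = 0 := by
      linear_combination a₂^2 * E1 + a₁^2 * E2 - 2*a₁*a₂ * E3
    exact (mul_eq_zero.mp h).resolve_right hd2
  have hγ : n₁ * n₂ = 0 := by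
    have h : n₁*n₂ * (a₁ * b₂ - a₂ * b₁)^2 = 0 := by
      linear_combination (a₁*b₂+a₂*b₁) * E3 - 2*a₂*b₂ * E1 +
        (a₁*a₂*(a₁*b₂ - a₂*b₁)) * hα + (b₁*b₂*(a₂*b₁ - a₁*b₂)) * hβ
    exact (mul_eq_zero.mp h).resolve_right hd2
  rcases mul_eq_zero.mp hα with h | h
  · subst h
    have hn₂ : n₂ = -1 := by linarith
    subst hn₂
    right
    norm_num
  · have hn₁ : n₁ = -1 := by linarith
    subst hn₁
    have hn₂ : n₂ = 0 := by
      rcases mul_eq_zero.mp hγ with h' | h' <;> omega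
    subst hn₂
    left
    norm_num
def Dq (h₁ h₂ n j : ℤ × ℤ) (q : ℝ × ℝ × ℝ × ℝ) : ℝ :=
  (n.1 : ℝ) * (((h₁.1 : ℝ) * q.1 + (h₁.2 : ℝ) * q.2.1 + q.2.2.1) ^ 2 + q.2.2.2)
  + (n.2 : ℝ) * (((h₂.1 : ℝ) * q.1 + (h₂.2 : ℝ) * q.2.1 + q.2.2.1) ^ 2 + q.2.2.2)
  + ((j.1 : ℝ) * q.1 + (j.2 : ℝ) * q.2.1 + q.2.2.1) ^ 2 + q.2.2.2

lemma one_le_abs_cast {m : ℤ} (hm : m ≠ 0) : (1:ℝ) ≤ |(m:ℝ)| := by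
  rw [← Int.cast_abs]; exact_mod_cast Int.one_le_abs hm

lemma pair_bound (h₁ h₂ : ℤ × ℤ) (hnp : h₁.1 * h₂.2 - h₁.2 * h₂.1 ≠ 0) (n j : ℤ × ℤ)
    (hne1 : (n, j) ≠ (((-1:ℤ), (0:ℤ)), h₁)) (hne2 : (n, j) ≠ (((0:ℤ), (-1:ℤ)), h₂))
    (ε : ℝ) (hε : 0 < ε) :
    volume ((Box ×ˢ Box ×ˢ Box ×ˢ Box) ∩ {q : ℝ×ℝ×ℝ×ℝ | |Dq h₁ h₂ n j q| ≤ ε})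
      ≤ ENNReal.ofReal (2*π) ^ 3 * ENNReal.ofReal (4 * Real.sqrt ε + 2 * ε) := by
  have hsqrt : 0 ≤ Real.sqrt ε := Real.sqrt_nonneg ε
  have hDc : Continuous (Dq h₁ h₂ n j) := by unfold Dq; fun_prop
  have hBoxm : MeasurableSet (Box ×ˢ Box ×ˢ Box ×ˢ Box : Set (ℝ×ℝ×ℝ×ℝ)) :=
    measurableSet_Ioo.prod (measurableSet_Ioo.prod (measurableSet_Ioo.prod measurableSet_Ioo))
  have hSm : MeasurableSet ((Box ×ˢ Box ×ˢ Box ×ˢ Box) ∩ {q : ℝ×ℝ×ℝ×ℝ | |Dq h₁ h₂ n j q| ≤ ε}) := by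
    refine hBoxm.inter ?_
    have h : {q : ℝ×ℝ×ℝ×ℝ | |Dq h₁ h₂ n j q| ≤ ε} = (Dq h₁ h₂ n j) ⁻¹' (Set.Icc (-ε) ε) := by
      ext q; simp [abs_le]
    rw [h]; exact hDc.measurable measurableSet_Icc
  set S := (Box ×ˢ Box ×ˢ Box ×ˢ Box) ∩ {q : ℝ×ℝ×ℝ×ℝ | |Dq h₁ h₂ n j q| ≤ ε} with hSdef
  by_cases hs : n.1 + n.2 + 1 = 0
  · -- quadratic cases
    by_cases ha1 : n.1 * h₁.1^2 + n.2 * h₂.1^2 + j.1^2 = 0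
    · by_cases ha2 : n.1 * h₁.2^2 + n.2 * h₂.2^2 + j.2^2 = 0
      · -- fully degenerate: D = 2b₁₂ xy + 2b₁₃ xz + 2b₂₃ yz
        have hDeq : ∀ x y z w : ℝ, Dq h₁ h₂ n j (x, y, z, w)
            = (2*((n.1 * h₁.1 * h₁.2 + n.2 * h₂.1 * h₂.2 + j.1 * j.2 : ℤ)):ℝ) * (x*y)
            + (2*((n.1 * h₁.1 + n.2 * h₂.1 + j.1 : ℤ)):ℝ) * (x*z)
            + (2*((n.1 * h₁.2 + n.2 * h₂.2 + j.2 : ℤ)):ℝ) * (y*z) := by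
          intro x y z w
          have c0 : ((n.1 + n.2 + 1 : ℤ) : ℝ) = 0 := by
            exact_mod_cast congrArg (fun t : ℤ => (t : ℝ)) hs
          have c1 : ((n.1 * h₁.1^2 + n.2 * h₂.1^2 + j.1^2 : ℤ) : ℝ) = 0 := by
            exact_mod_cast congrArg (fun t : ℤ => (t : ℝ)) ha1
          have c2 : ((n.1 * h₁.2^2 + n.2 * h₂.2^2 + j.2^2 : ℤ) : ℝ) = 0 := by
            exact_mod_cast congrArg (fun t : ℤ => (t : ℝ)) ha2
          unfold Dq
          push_cast at c0 c1 c2 ⊢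
          linear_combination x^2 * c1 + y^2 * c2 + (z^2 + w) * c0
        set b12 : ℤ := n.1 * h₁.1 * h₁.2 + n.2 * h₂.1 * h₂.2 + j.1 * j.2 with hb12
        set b13 : ℤ := n.1 * h₁.1 + n.2 * h₂.1 + j.1 with hb13
        set b23 : ℤ := n.1 * h₁.2 + n.2 * h₂.2 + j.2 with hb23
        by_cases hball : b12 = 0 ∧ b13 = 0 ∧ b23 = 0
        · exfalso
          rcases alg_lemma h₁ h₂ hnp n j hs ha1 ha2 hball.1 hball.2.1 hball.2.2 with h | h
          · exact hne1 h
          · exact hne2 h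
        · -- split into small-slope and large-slope parts
          have hLc1 : Continuous (fun q : ℝ×ℝ×ℝ×ℝ => 2*(b13:ℝ)*q.1 + 2*(b23:ℝ)*q.2.1) := by fun_prop
          have hLc2 : Continuous (fun q : ℝ×ℝ×ℝ×ℝ => 2*(b12:ℝ)*q.2.1 + 2*(b13:ℝ)*q.2.2.1) := by fun_prop
          have habs_m : ∀ (f : (ℝ×ℝ×ℝ×ℝ) → ℝ), Continuous f → ∀ c : ℝ, MeasurableSet {q : ℝ×ℝ×ℝ×ℝ | |f q| ≤ c} := by
            intro f hf c
            have h : {q : ℝ×ℝ×ℝ×ℝ | |f q| ≤ c} = f ⁻¹' (Set.Icc (-c) c) := by ext q; simp [abs_le]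
            rw [h]; exact hf.measurable measurableSet_Icc
          have habs_m2 : ∀ (f : (ℝ×ℝ×ℝ×ℝ) → ℝ), Continuous f → ∀ c : ℝ, MeasurableSet {q : ℝ×ℝ×ℝ×ℝ | c ≤ |f q|} := by
            intro f hf c
            have h : {q : ℝ×ℝ×ℝ×ℝ | c ≤ |f q|} = (fun q => |f q|) ⁻¹' (Set.Ici c) := by ext q; simp
            rw [h]; exact (hf.abs).measurable measurableSet_Ici
          by_cases hb12 : b12 = 0
          · -- D = (2 b13 x + 2 b23 y) * z
            have hbv : b13 ≠ 0 ∨ b23 ≠ 0 := by tauto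
            set L : (ℝ×ℝ×ℝ×ℝ) → ℝ := fun q => 2*(b13:ℝ)*q.1 + 2*(b23:ℝ)*q.2.1 with hL
            set S₁ := (Box ×ˢ Box ×ˢ Box ×ˢ Box : Set (ℝ×ℝ×ℝ×ℝ)) ∩ {q | |L q| ≤ Real.sqrt ε} with hS₁
            set S₂ := S ∩ {q : ℝ×ℝ×ℝ×ℝ | Real.sqrt ε ≤ |L q|} with hS₂
            have hsplit : S ⊆ S₁ ∪ S₂ := by
              intro q hq
              rcases le_total (|L q|) (Real.sqrt ε) with h | h
              · exact Or.inl ⟨hq.1, h⟩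
              · exact Or.inr ⟨hq, h⟩
            have hS₁m : MeasurableSet S₁ := hBoxm.inter (habs_m L hLc1 _)
            have hS₂m : MeasurableSet S₂ := hSm.inter (habs_m2 L hLc1 _)
            have hv1 : volume S₁ ≤ ENNReal.ofReal (2*π) ^ 3 * ENNReal.ofReal (2 * Real.sqrt ε / 1) := by
              rcases hbv with hb | hb
              · refine slice1 S₁ hS₁m _ (fun q hq => ⟨hq.1.2.1, hq.1.2.2.1, hq.1.2.2.2⟩) ?_
                intro y z w
                refine le_trans (measure_mono ?_)
                  (lin_bound ((2*b13 : ℤ):ℝ) (2*(b23:ℝ)*y) (Real.sqrt ε) 1 hsqrt one_pos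
                    (one_le_abs_cast (by omega)))
                intro x hx
                simp only [Set.mem_setOf_eq]
                rw [show ((2*b13:ℤ):ℝ) * x + 2*(b23:ℝ)*y = L (x,y,z,w) from by rw [hL]; push_cast; ring]
                exact hx.2
              · refine slice2 S₁ hS₁m _ (fun q hq => ⟨hq.1.1, hq.1.2.2.1, hq.1.2.2.2⟩) ?_
                intro x z w
                refine le_trans (measure_mono ?_)
                  (lin_bound ((2*b23 : ℤ):ℝ) (2*(b13:ℝ)*x) (Real.sqrt ε) 1 hsqrt one_pos
                    (one_le_abs_cast (by omega)))
                intro y hy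
                simp only [Set.mem_setOf_eq]
                rw [show ((2*b23:ℤ):ℝ) * y + 2*(b13:ℝ)*x = L (x,y,z,w) from by rw [hL]; push_cast; ring]
                exact hy.2
            have hv2 : volume S₂ ≤ ENNReal.ofReal (2*π) ^ 3 * ENNReal.ofReal (2 * Real.sqrt ε) := by
              refine slice3 S₂ hS₂m _ (fun q hq => ⟨hq.1.1.1, hq.1.1.2.1, hq.1.1.2.2.2⟩) ?_
              intro x y w
              by_cases hLs : Real.sqrt ε ≤ |2*(b13:ℝ)*x + 2*(b23:ℝ)*y|
              · refine le_trans (measure_mono ?_) (le_trans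
                  (lin_bound (2*(b13:ℝ)*x + 2*(b23:ℝ)*y) 0 ε (Real.sqrt ε)
                    hε.le (Real.sqrt_pos.mpr hε) hLs) ?_)
                · intro z hz
                  simp only [Set.mem_setOf_eq]
                  have hd : |Dq h₁ h₂ n j (x,y,z,w)| ≤ ε := hz.1.2
                  rw [hDeq x y z w] at hd
                  have hc : ((b12:ℝ)) = 0 := by exact_mod_cast congrArg (fun t : ℤ => (t : ℝ)) hb12
                  rw [show (2*(b13:ℝ)*x + 2*(b23:ℝ)*y) * z + 0
                      = (2*((b12:ℤ)):ℝ) * (x*y) + (2*((b13:ℤ)):ℝ) * (x*z) + (2*((b23:ℤ)):ℝ) * (y*z) from by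
                    rw [hc]  -- hc : (b12:ℝ) = 0
                    push_cast
                    ring]
                  exact hd
                · exact le_of_eq (congrArg ENNReal.ofReal (by rw [mul_div_assoc, Real.div_sqrt]))
              · have hempty : {z : ℝ | (x, y, z, w) ∈ S₂} = ∅ := by
                  rw [Set.eq_empty_iff_forall_notMem]
                  intro z hz
                  exact hLs hz.2
                rw [hempty]
                simp
            calc volume S ≤ volume (S₁ ∪ S₂) := measure_mono hsplit
              _ ≤ volume S₁ + volume S₂ := measure_union_le _ _
              _ ≤ ENNReal.ofReal (2*π) ^ 3 * ENNReal.ofReal (2 * Real.sqrt ε / 1)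
                  + ENNReal.ofReal (2*π) ^ 3 * ENNReal.ofReal (2 * Real.sqrt ε) := add_le_add hv1 hv2
              _ ≤ ENNReal.ofReal (2*π) ^ 3 * ENNReal.ofReal (4 * Real.sqrt ε + 2 * ε) := by
                  rw [← mul_add, ← ENNReal.ofReal_add (by positivity) (by positivity)]
                  refine mul_le_mul_right (ENNReal.ofReal_le_ofReal ?_) _
                  rw [div_one]; linarith
          · -- b12 ≠ 0 : D = (2 b12 y + 2 b13 z) * x + 2 b23 y z
            set L : (ℝ×ℝ×ℝ×ℝ) → ℝ := fun q => 2*(b12:ℝ)*q.2.1 + 2*(b13:ℝ)*q.2.2.1 with hL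
            set S₁ := (Box ×ˢ Box ×ˢ Box ×ˢ Box : Set (ℝ×ℝ×ℝ×ℝ)) ∩ {q | |L q| ≤ Real.sqrt ε} with hS₁
            set S₂ := S ∩ {q : ℝ×ℝ×ℝ×ℝ | Real.sqrt ε ≤ |L q|} with hS₂
            have hsplit : S ⊆ S₁ ∪ S₂ := by
              intro q hq
              rcases le_total (|L q|) (Real.sqrt ε) with h | h
              · exact Or.inl ⟨hq.1, h⟩
              · exact Or.inr ⟨hq, h⟩
            have hS₁m : MeasurableSet S₁ := hBoxm.inter (habs_m L hLc2 _)
            have hS₂m : MeasurableSet S₂ := hSm.inter (habs_m2 L hLc2 _)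
            have hv1 : volume S₁ ≤ ENNReal.ofReal (2*π) ^ 3 * ENNReal.ofReal (2 * Real.sqrt ε / 1) := by
              refine slice2 S₁ hS₁m _ (fun q hq => ⟨hq.1.1, hq.1.2.2.1, hq.1.2.2.2⟩) ?_
              intro x z w
              refine le_trans (measure_mono ?_)
                (lin_bound ((2*b12 : ℤ):ℝ) (2*(b13:ℝ)*z) (Real.sqrt ε) 1 hsqrt one_pos
                  (one_le_abs_cast (by omega)))
              intro y hy
              simp only [Set.mem_setOf_eq]
              rw [show ((2*b12:ℤ):ℝ) * y + 2*(b13:ℝ)*z = L (x,y,z,w) from by rw [hL]; push_cast; ring]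
              exact hy.2
            have hv2 : volume S₂ ≤ ENNReal.ofReal (2*π) ^ 3 * ENNReal.ofReal (2 * Real.sqrt ε) := by
              refine slice1 S₂ hS₂m _ (fun q hq => ⟨hq.1.1.2.1, hq.1.1.2.2.1, hq.1.1.2.2.2⟩) ?_
              intro y z w
              by_cases hLs : Real.sqrt ε ≤ |2*(b12:ℝ)*y + 2*(b13:ℝ)*z|
              · refine le_trans (measure_mono ?_) (le_trans
                  (lin_bound (2*(b12:ℝ)*y + 2*(b13:ℝ)*z) (2*(b23:ℝ)*(y*z)) ε (Real.sqrt ε)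
                    hε.le (Real.sqrt_pos.mpr hε) hLs) ?_)
                · intro x hx
                  simp only [Set.mem_setOf_eq]
                  have hd : |Dq h₁ h₂ n j (x,y,z,w)| ≤ ε := hx.1.2
                  rw [hDeq x y z w] at hd
                  rw [show (2*(b12:ℝ)*y + 2*(b13:ℝ)*z) * x + 2*(b23:ℝ)*(y*z)
                      = (2*((b12:ℤ)):ℝ) * (x*y) + (2*((b13:ℤ)):ℝ) * (x*z) + (2*((b23:ℤ)):ℝ) * (y*z) from by
                    push_cast; ring]
                  exact hd
                · exact le_of_eq (congrArg ENNReal.ofReal (by rw [mul_div_assoc, Real.div_sqrt]))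
              · have hempty : {x : ℝ | (x, y, z, w) ∈ S₂} = ∅ := by
                  rw [Set.eq_empty_iff_forall_notMem]
                  intro x hx
                  exact hLs hx.2
                rw [hempty]
                simp
            calc volume S ≤ volume (S₁ ∪ S₂) := measure_mono hsplit
              _ ≤ volume S₁ + volume S₂ := measure_union_le _ _
              _ ≤ ENNReal.ofReal (2*π) ^ 3 * ENNReal.ofReal (2 * Real.sqrt ε / 1)
                  + ENNReal.ofReal (2*π) ^ 3 * ENNReal.ofReal (2 * Real.sqrt ε) := add_le_add hv1 hv2
              _ ≤ ENNReal.ofReal (2*π) ^ 3 * ENNReal.ofReal (4 * Real.sqrt ε + 2 * ε) := by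
                  rw [← mul_add, ← ENNReal.ofReal_add (by positivity) (by positivity)]
                  refine mul_le_mul_right (ENNReal.ofReal_le_ofReal ?_) _
                  rw [div_one]; linarith
      · -- a₂ ≠ 0 : quadratic in y
        refine le_trans (slice2 S hSm (ENNReal.ofReal (4 * Real.sqrt ε))
          (fun q hq => ⟨hq.1.1, hq.1.2.2.1, hq.1.2.2.2⟩) ?_) ?_
        · intro x z w
          refine le_trans (measure_mono ?_)
            (quad_bound ((n.1 * h₁.2^2 + n.2 * h₂.2^2 + j.2^2 : ℤ):ℝ)
              (2*((n.1:ℝ) * h₁.2 * (h₁.1*x+z) + (n.2:ℝ) * h₂.2 * (h₂.1*x+z) + (j.2:ℝ)*(j.1*x+z)))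
              ((n.1:ℝ) * ((h₁.1*x+z)^2+w) + (n.2:ℝ)*((h₂.1*x+z)^2+w) + ((j.1:ℝ)*x+z)^2 + w)
              ε hε.le (one_le_abs_cast ha2))
          intro y hy
          simp only [Set.mem_setOf_eq]
          rw [show ((n.1 * h₁.2^2 + n.2 * h₂.2^2 + j.2^2 : ℤ):ℝ) * y^2
              + (2*((n.1:ℝ) * h₁.2 * (h₁.1*x+z) + (n.2:ℝ) * h₂.2 * (h₂.1*x+z) + (j.2:ℝ)*(j.1*x+z))) * y
              + ((n.1:ℝ) * ((h₁.1*x+z)^2+w) + (n.2:ℝ)*((h₂.1*x+z)^2+w) + ((j.1:ℝ)*x+z)^2 + w)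
              = Dq h₁ h₂ n j (x, y, z, w) from by unfold Dq; push_cast; ring]
          exact hy.2
        · exact mul_le_mul_right (ENNReal.ofReal_le_ofReal (by linarith)) _
    · -- a₁ ≠ 0 : quadratic in x
      refine le_trans (slice1 S hSm (ENNReal.ofReal (4 * Real.sqrt ε))
        (fun q hq => ⟨hq.1.2.1, hq.1.2.2.1, hq.1.2.2.2⟩) ?_) ?_
      · intro y z w
        refine le_trans (measure_mono ?_)
          (quad_bound ((n.1 * h₁.1^2 + n.2 * h₂.1^2 + j.1^2 : ℤ):ℝ)
            (2*((n.1:ℝ) * h₁.1 * (h₁.2*y+z) + (n.2:ℝ) * h₂.1 * (h₂.2*y+z) + (j.1:ℝ)*(j.2*y+z)))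
            ((n.1:ℝ) * ((h₁.2*y+z)^2+w) + (n.2:ℝ)*((h₂.2*y+z)^2+w) + ((j.2:ℝ)*y+z)^2 + w)
            ε hε.le (one_le_abs_cast ha1))
        intro x hx
        simp only [Set.mem_setOf_eq]
        rw [show ((n.1 * h₁.1^2 + n.2 * h₂.1^2 + j.1^2 : ℤ):ℝ) * x^2
            + (2*((n.1:ℝ) * h₁.1 * (h₁.2*y+z) + (n.2:ℝ) * h₂.1 * (h₂.2*y+z) + (j.1:ℝ)*(j.2*y+z))) * x
            + ((n.1:ℝ) * ((h₁.2*y+z)^2+w) + (n.2:ℝ)*((h₂.2*y+z)^2+w) + ((j.2:ℝ)*y+z)^2 + w)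
            = Dq h₁ h₂ n j (x, y, z, w) from by unfold Dq; push_cast; ring]
        exact hx.2
      · exact mul_le_mul_right (ENNReal.ofReal_le_ofReal (by linarith)) _
  · -- linear in w
    refine le_trans (slice4 S hSm (ENNReal.ofReal (2*ε/1))
      (fun q hq => ⟨hq.1.1, hq.1.2.1, hq.1.2.2.1⟩) ?_) ?_
    · intro x y z
      refine le_trans (measure_mono ?_)
        (lin_bound ((n.1+n.2+1 : ℤ):ℝ) (Dq h₁ h₂ n j (x,y,z,0)) ε 1 hε.le one_pos
          (one_le_abs_cast hs))
      intro w hw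
      simp only [Set.mem_setOf_eq]
      rw [show ((n.1+n.2+1:ℤ):ℝ) * w + Dq h₁ h₂ n j (x,y,z,0) = Dq h₁ h₂ n j (x,y,z,w) from by
        unfold Dq; push_cast; ring]
      exact hw.2
    · refine mul_le_mul_right (ENNReal.ofReal_le_ofReal ?_) _
      rw [div_one]; linarith

lemma exp13 : 810*(2*π)^3 ≤ Real.exp 13 := by
  have hpi : π < 3.15 := Real.pi_lt_d2
  have hpi0 : 0 < π := Real.pi_pos
  have h0 : (2*π)^3 ≤ (6.3:ℝ)^3 := by
    apply pow_le_pow_left₀ (by positivity) (by linarith)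
  have h2 : Real.exp 13 = Real.exp 1 ^ (13:ℕ) := by
    rw [← Real.exp_nat_mul]; norm_num
  have h3 : (2.7:ℝ)^(13:ℕ) ≤ Real.exp 1 ^ (13:ℕ) := by
    have h := Real.exp_one_gt_d9
    gcongr
    linarith
  rw [h2]
  calc 810*(2*π)^3 ≤ 810*(6.3:ℝ)^3 := by linarith
    _ ≤ (2.7:ℝ)^(13:ℕ) := by norm_num
    _ ≤ Real.exp 1 ^ (13:ℕ) := h3

lemma asym (p A : ℕ) (hp : 1 ≤ p) (hA : 2 ≤ A) :
    ∃ δ₀ ∈ Set.Ioo (0:ℝ) 1, ∀ δ ∈ Set.Ioo (0:ℝ) δ₀,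
      (2*(A:ℝ)^(⌊|Real.log δ|^((3:ℝ)/4)⌋₊)+1)^4 *
        ((2*π)^3 * (4*Real.sqrt (2*δ^((p:ℝ)/2)) + 2*(2*δ^((p:ℝ)/2)))) < δ^((p:ℝ)/5) := by
  have hA1 : (1:ℝ) ≤ (A:ℝ) := by exact_mod_cast Nat.one_le_iff_ne_zero.mpr (by omega)
  have hlogA : 0 ≤ Real.log A := Real.log_nonneg hA1
  set T : ℝ := 160*(Real.log A + 13) with hT
  have hT0 : 2080 ≤ T := by rw [hT]; linarith
  have hTpos : (0:ℝ) < T := by linarith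
  have hT4 : (0:ℝ) < T^4 := pow_pos hTpos 4
  refine ⟨Real.exp (-(T^4)), ⟨Real.exp_pos _, ?_⟩, ?_⟩
  · have h := Real.exp_lt_exp.mpr (show -(T^4) < 0 by linarith)
    rwa [Real.exp_zero] at h
  intro δ hδ
  have hδ0 : 0 < δ := hδ.1
  set x : ℝ := -Real.log δ with hx
  have hlog : Real.log δ < -(T^4) := by
    have h := Real.log_lt_log hδ0 hδ.2
    rwa [Real.log_exp] at h
  have hxT : T^4 < x := by rw [hx]; linarith
  have hx0 : (0:ℝ) < x := lt_trans hT4 hxT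
  have habs : |Real.log δ| = x := by rw [hx, abs_of_neg (by linarith : Real.log δ < 0)]
  have hp1 : (1:ℝ) ≤ (p:ℝ) := by exact_mod_cast hp
  set R : ℕ := ⌊|Real.log δ|^((3:ℝ)/4)⌋₊ with hR
  have hRle : (R:ℝ) ≤ x^((3:ℝ)/4) := by
    rw [hR, habs]
    exact Nat.floor_le (Real.rpow_nonneg hx0.le _)
  have hpow : ∀ y : ℝ, δ ^ y = Real.exp (-(x*y)) := by
    intro y
    rw [Real.rpow_def_of_pos hδ0]
    congr 1
    rw [hx]; ring
  have hApow : (A:ℝ)^R = Real.exp (R * Real.log A) := by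
    rw [← Real.log_pow, Real.exp_log (by positivity)]
  have hsqrtE : ∀ u : ℝ, Real.sqrt (Real.exp u) = Real.exp (u/2) := by
    intro u
    rw [show Real.exp u = (Real.exp (u/2))^2 by rw [pow_two, ← Real.exp_add, add_halves]]
    exact Real.sqrt_sq (Real.exp_pos _).le
  -- rewrite everything in exponential form
  rw [hpow ((p:ℝ)/2), hpow ((p:ℝ)/5)]
  rw [Real.sqrt_mul (by norm_num : (0:ℝ) ≤ 2), hsqrtE]
  -- key exponent inequality
  have hx34T : x^((3:ℝ)/4) * T ≤ x := by
    have h14 : T ≤ x^((1:ℝ)/4) := by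
      have h := Real.rpow_le_rpow (le_of_lt hT4) hxT.le (by norm_num : (0:ℝ) ≤ 1/4)
      rwa [← Real.rpow_natCast T 4, ← Real.rpow_mul hTpos.le, (by norm_num : ((4:ℕ):ℝ) * (1/4) = 1),
        Real.rpow_one] at h
    calc x^((3:ℝ)/4) * T ≤ x^((3:ℝ)/4) * x^((1:ℝ)/4) :=
          mul_le_mul_of_nonneg_left h14 (Real.rpow_nonneg hx0.le _)
      _ = x := by rw [← Real.rpow_add hx0]; norm_num
  have hkey : 13 + 4*(R:ℝ)*Real.log A < x*(p:ℝ)/20 := by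
    have h1 : 4*(R:ℝ)*Real.log A ≤ 4*(x/T)*Real.log A := by
      have hxdT : x^((3:ℝ)/4) ≤ x/T := by
        rw [le_div_iff₀ hTpos]; exact hx34T
      have := le_trans hRle hxdT
      nlinarith [hlogA]
    have h2 : 4*(x/T)*Real.log A ≤ x/40 := by
      rw [show 4*(x/T)*Real.log A = (4*x*Real.log A)/T from by ring,
        div_le_div_iff₀ hTpos (by norm_num : (0:ℝ) < 40)]
      rw [hT]
      nlinarith [mul_nonneg hx0.le hlogA]
    have h3 : (13:ℝ) < x/40 := by
      have h7 : (1:ℝ) ≤ T^3 := one_le_pow₀ (by linarith)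
      have h6 : T ≤ T^4 := by nlinarith
      linarith
    have h4 : x/20 ≤ x*(p:ℝ)/20 := by nlinarith
    linarith
  -- assemble
  have hE : ∀ u : ℝ, 0 < Real.exp u := Real.exp_pos
  have hsq2 : Real.sqrt 2 ≤ (1.5:ℝ) := by
    rw [show (1.5:ℝ) = Real.sqrt (1.5^2) from (Real.sqrt_sq (by norm_num)).symm]
    apply Real.sqrt_le_sqrt; norm_num
  have hb1 : (2*(A:ℝ)^R+1)^4 ≤ 81 * Real.exp (4*((R:ℝ) * Real.log A)) := by
    have hge1 : (1:ℝ) ≤ (A:ℝ)^R := one_le_pow₀ hA1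
    calc (2*(A:ℝ)^R+1)^4 ≤ (3*(A:ℝ)^R)^4 := by
          apply pow_le_pow_left₀ (by positivity) (by linarith)
      _ = 81 * ((A:ℝ)^R)^4 := by ring
      _ = 81 * Real.exp (4*((R:ℝ) * Real.log A)) := by
          rw [hApow, ← Real.exp_nat_mul]
          norm_num
  set E1 : ℝ := Real.exp (-(x*((p:ℝ)/2))/2) with hE1
  set E2 : ℝ := Real.exp (-(x*((p:ℝ)/2))) with hE2
  have hE1pos : 0 < E1 := Real.exp_pos _
  have hE2pos : 0 < E2 := Real.exp_pos _
  have hE21 : E2 ≤ E1 := by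
    rw [hE1, hE2]
    apply Real.exp_le_exp.mpr
    have hxp : 0 ≤ x*((p:ℝ)/2) := mul_nonneg hx0.le (by linarith)
    linarith
  have hterm : (2*π)^3 * (4*(Real.sqrt 2 * E1) + 2*(2*E2)) ≤ (2*π)^3 * (10*E1) := by
    have hpi0 : 0 < π := Real.pi_pos
    have h : 4*(Real.sqrt 2 * E1) + 2*(2*E2) ≤ 10*E1 := by nlinarith
    apply mul_le_mul_of_nonneg_left h (by positivity)
  calc (2*(A:ℝ)^R+1)^4 * ((2*π)^3 * (4*(Real.sqrt 2 * E1) + 2*(2*E2)))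
      ≤ (81 * Real.exp (4*((R:ℝ) * Real.log A))) * ((2*π)^3 * (10*E1)) := by
        apply mul_le_mul hb1 hterm (by positivity) (by positivity)
    _ = (810*(2*π)^3) * (Real.exp (4*((R:ℝ) * Real.log A)) * E1) := by ring
    _ ≤ Real.exp 13 * (Real.exp (4*((R:ℝ) * Real.log A)) * E1) := by
        apply mul_le_mul_of_nonneg_right exp13 (by positivity)
    _ = Real.exp (13 + 4*((R:ℝ) * Real.log A) + (-(x*((p:ℝ)/2))/2)) := by
        rw [Real.exp_add, Real.exp_add]; ring
    _ < Real.exp (-(x*((p:ℝ)/5))) := by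
        apply Real.exp_lt_exp.mpr
        have : 13 + 4*(R:ℝ)*Real.log A < x*(p:ℝ)/20 := hkey
        linarith

/-- **initial-scale measure excision.** For non-parallel nonzero
`h₁, h₂ ∈ ℤ²` and an integer `A ≥ 2`, for all small `δ`, with `R = ⌊|log δ|^{3/4}⌋` and
`N = A^R`, the set of `(λ, m, M) ∈ (0,2π)⁴` where some diagonal entry `D(n, j)` with
`(n, j)` in the `N`-box but outside the resonant set is `≤ 2δ^{p/2}` in modulus has
measure `< δ^{p/5}`. -/
theorem stmt_15 (p : ℕ) (hp : 1 ≤ p) (h₁ h₂ : ℤ × ℤ) (hh₁ : h₁ ≠ 0) (hh₂ : h₂ ≠ 0)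
    (hnp : h₁.1 * h₂.2 - h₁.2 * h₂.1 ≠ 0) (A : ℕ) (hA : 2 ≤ A) :
    ∃ δ₀ ∈ Set.Ioo (0 : ℝ) 1, ∀ δ ∈ Set.Ioo (0 : ℝ) δ₀,
      volume {q : ℝ × ℝ × ℝ × ℝ |
          q ∈ Set.Ioo 0 (2 * π) ×ˢ Set.Ioo 0 (2 * π) ×ˢ Set.Ioo 0 (2 * π) ×ˢ Set.Ioo 0 (2 * π) ∧
          ∃ n j : ℤ × ℤ,
            (|n.1| ≤ (A : ℤ) ^ (⌊|Real.log δ| ^ ((3 : ℝ) / 4)⌋₊) ∧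
              |n.2| ≤ (A : ℤ) ^ (⌊|Real.log δ| ^ ((3 : ℝ) / 4)⌋₊) ∧
              |j.1| ≤ (A : ℤ) ^ (⌊|Real.log δ| ^ ((3 : ℝ) / 4)⌋₊) ∧
              |j.2| ≤ (A : ℤ) ^ (⌊|Real.log δ| ^ ((3 : ℝ) / 4)⌋₊)) ∧
            (n, j) ≠ (((-1 : ℤ), (0 : ℤ)), h₁) ∧ (n, j) ≠ (((0 : ℤ), (-1 : ℤ)), h₂) ∧
            |(n.1 : ℝ) * (((h₁.1 : ℝ) * q.1 + (h₁.2 : ℝ) * q.2.1 + q.2.2.1) ^ 2 + q.2.2.2)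
              + (n.2 : ℝ) * (((h₂.1 : ℝ) * q.1 + (h₂.2 : ℝ) * q.2.1 + q.2.2.1) ^ 2 + q.2.2.2)
              + ((j.1 : ℝ) * q.1 + (j.2 : ℝ) * q.2.1 + q.2.2.1) ^ 2 + q.2.2.2|
              ≤ 2 * δ ^ ((p : ℝ) / 2)}
        < ENNReal.ofReal (δ ^ ((p : ℝ) / 5)) := by
  obtain ⟨δ₀, hδ₀, hmain⟩ := asym p A hp hA
  refine ⟨δ₀, hδ₀, ?_⟩
  intro δ hδ
  have hδ0 : 0 < δ := hδ.1
  set R : ℕ := ⌊|Real.log δ| ^ ((3:ℝ)/4)⌋₊ with hRdef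
  set N : ℤ := (A : ℤ) ^ R with hNdef
  have hN0 : 0 ≤ N := by positivity
  set ε : ℝ := 2 * δ ^ ((p:ℝ)/2) with hεdef
  have hεpos : 0 < ε := by
    have := Real.rpow_pos_of_pos hδ0 ((p:ℝ)/2)
    positivity
  set F : Finset ((ℤ×ℤ)×(ℤ×ℤ)) :=
    (Finset.Icc (-N) N ×ˢ Finset.Icc (-N) N) ×ˢ (Finset.Icc (-N) N ×ˢ Finset.Icc (-N) N) with hF
  set F' : Finset ((ℤ×ℤ)×(ℤ×ℤ)) :=
    F.filter (fun r => r ≠ (((-1:ℤ),(0:ℤ)),h₁) ∧ r ≠ (((0:ℤ),(-1:ℤ)),h₂)) with hF'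
  -- inclusion into the finite union
  have hsub : {q : ℝ × ℝ × ℝ × ℝ |
          q ∈ Set.Ioo 0 (2 * π) ×ˢ Set.Ioo 0 (2 * π) ×ˢ Set.Ioo 0 (2 * π) ×ˢ Set.Ioo 0 (2 * π) ∧
          ∃ n j : ℤ × ℤ,
            (|n.1| ≤ (A : ℤ) ^ (⌊|Real.log δ| ^ ((3 : ℝ) / 4)⌋₊) ∧
              |n.2| ≤ (A : ℤ) ^ (⌊|Real.log δ| ^ ((3 : ℝ) / 4)⌋₊) ∧
              |j.1| ≤ (A : ℤ) ^ (⌊|Real.log δ| ^ ((3 : ℝ) / 4)⌋₊) ∧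
              |j.2| ≤ (A : ℤ) ^ (⌊|Real.log δ| ^ ((3 : ℝ) / 4)⌋₊)) ∧
            (n, j) ≠ (((-1 : ℤ), (0 : ℤ)), h₁) ∧ (n, j) ≠ (((0 : ℤ), (-1 : ℤ)), h₂) ∧
            |(n.1 : ℝ) * (((h₁.1 : ℝ) * q.1 + (h₁.2 : ℝ) * q.2.1 + q.2.2.1) ^ 2 + q.2.2.2)
              + (n.2 : ℝ) * (((h₂.1 : ℝ) * q.1 + (h₂.2 : ℝ) * q.2.1 + q.2.2.1) ^ 2 + q.2.2.2)
              + ((j.1 : ℝ) * q.1 + (j.2 : ℝ) * q.2.1 + q.2.2.1) ^ 2 + q.2.2.2|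
              ≤ 2 * δ ^ ((p : ℝ) / 2)}
      ⊆ ⋃ r ∈ F', ((Box ×ˢ Box ×ˢ Box ×ˢ Box) ∩ {q : ℝ×ℝ×ℝ×ℝ | |Dq h₁ h₂ r.1 r.2 q| ≤ ε}) := by
    intro q hq
    obtain ⟨hbox, n, j, hbnd, hne1, hne2, hD⟩ := hq
    refine Set.mem_iUnion₂.mpr ⟨(n, j), ?_, ?_⟩
    · rw [hF', Finset.mem_filter]
      refine ⟨?_, hne1, hne2⟩
      rw [hF]
      refine Finset.mem_product.mpr ⟨Finset.mem_product.mpr ⟨?_, ?_⟩, Finset.mem_product.mpr ⟨?_, ?_⟩⟩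
      · exact Finset.mem_Icc.mpr (abs_le.mp hbnd.1)
      · exact Finset.mem_Icc.mpr (abs_le.mp hbnd.2.1)
      · exact Finset.mem_Icc.mpr (abs_le.mp hbnd.2.2.1)
      · exact Finset.mem_Icc.mpr (abs_le.mp hbnd.2.2.2)
    · exact ⟨hbox, hD⟩
  -- counting
  have hcard1 : (Finset.Icc (-N) N).card = (2*N+1).toNat := by
    rw [Int.card_Icc]; congr 1; ring
  have hcardF : F.card = ((2*N+1).toNat)^4 := by
    rw [hF]; simp only [Finset.card_product, hcard1]; ring
  have hcastc : (((2*N+1).toNat : ℕ) : ℝ) = 2*(A:ℝ)^R + 1 := by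
    have h1 : (((2*N+1).toNat : ℕ) : ℤ) = 2*N+1 := Int.toNat_of_nonneg (by omega)
    have h2 : (((2*N+1).toNat : ℕ) : ℝ) = ((2*N+1 : ℤ) : ℝ) := by exact_mod_cast congrArg (fun t : ℤ => (t:ℝ)) h1
    rw [h2, hNdef]; push_cast; ring
  have hcardR : ((F'.card : ℕ) : ℝ) ≤ (2*(A:ℝ)^R + 1)^4 := by
    have h1 : F'.card ≤ F.card := Finset.card_filter_le _ _
    have h2 : ((F'.card : ℕ) : ℝ) ≤ ((F.card : ℕ) : ℝ) := by exact_mod_cast h1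
    rw [hcardF] at h2
    rw [show (((((2*N+1).toNat)^4 : ℕ)) : ℝ) = (((2*N+1).toNat : ℕ) : ℝ)^4 from by push_cast; ring] at h2
    rw [hcastc] at h2
    exact h2
  -- measure bound
  have hvol : volume (⋃ r ∈ F', ((Box ×ˢ Box ×ˢ Box ×ˢ Box) ∩ {q : ℝ×ℝ×ℝ×ℝ | |Dq h₁ h₂ r.1 r.2 q| ≤ ε}))
      ≤ F'.card • (ENNReal.ofReal (2*π) ^ 3 * ENNReal.ofReal (4 * Real.sqrt ε + 2 * ε)) := by
    refine le_trans (measure_biUnion_finset_le _ _) ?_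
    refine Finset.sum_le_card_nsmul _ _ _ ?_
    intro r hr
    rw [hF', Finset.mem_filter] at hr
    have hne1 : (r.1, r.2) ≠ (((-1:ℤ),(0:ℤ)),h₁) := by
      intro h; exact hr.2.1 (by rw [← h])
    have hne2 : (r.1, r.2) ≠ (((0:ℤ),(-1:ℤ)),h₂) := by
      intro h; exact hr.2.2 (by rw [← h])
    exact pair_bound h₁ h₂ hnp r.1 r.2 hne1 hne2 ε hεpos
  have hsmul : F'.card • (ENNReal.ofReal (2*π) ^ 3 * ENNReal.ofReal (4 * Real.sqrt ε + 2 * ε))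
      = ENNReal.ofReal ((F'.card : ℝ) * ((2*π)^3 * (4 * Real.sqrt ε + 2 * ε))) := by
    rw [nsmul_eq_mul]
    rw [← ENNReal.ofReal_natCast]
    rw [← ENNReal.ofReal_pow (by positivity)]
    rw [← ENNReal.ofReal_mul (by positivity)]
    rw [← ENNReal.ofReal_mul (by positivity)]
  -- final strict inequality in ℝ
  have hreal : (F'.card : ℝ) * ((2*π)^3 * (4 * Real.sqrt ε + 2 * ε)) < δ ^ ((p:ℝ)/5) := by
    have hb := hmain δ hδ
    have hnonneg : (0:ℝ) ≤ (2*π)^3 * (4 * Real.sqrt ε + 2 * ε) := by positivity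
    calc (F'.card : ℝ) * ((2*π)^3 * (4 * Real.sqrt ε + 2 * ε))
        ≤ (2*(A:ℝ)^R + 1)^4 * ((2*π)^3 * (4 * Real.sqrt ε + 2 * ε)) :=
          mul_le_mul_of_nonneg_right hcardR hnonneg
      _ < δ ^ ((p:ℝ)/5) := by rw [hεdef]; exact hb
  calc volume _ ≤ volume (⋃ r ∈ F', ((Box ×ˢ Box ×ˢ Box ×ˢ Box) ∩ {q : ℝ×ℝ×ℝ×ℝ | |Dq h₁ h₂ r.1 r.2 q| ≤ ε})) :=
        measure_mono hsub
    _ ≤ F'.card • (ENNReal.ofReal (2*π) ^ 3 * ENNReal.ofReal (4 * Real.sqrt ε + 2 * ε)) := hvol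
    _ = ENNReal.ofReal ((F'.card : ℝ) * ((2*π)^3 * (4 * Real.sqrt ε + 2 * ε))) := hsmul
    _ < ENNReal.ofReal (δ ^ ((p:ℝ)/5)) := by
        apply (ENNReal.ofReal_lt_ofReal_iff (Real.rpow_pos_of_pos hδ0 _)).mpr hreal
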